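/- Let d ≥ 1 be a natural number, let δ > 0, and let S ⊆ ℕ² be a finite nonempty downward closed set with N = |S| whose d-robustness satisfies Π_d(S) ≥ δ·N. Then N ≥ d²/2 + d·√(2δN) − d. -/

import Mathlib

open Finset

/-- A finite downward closed subset of ℕ is an initial segment. -/
private lemma nat_dc_iff (T : Set ℕ) (hT : T.Finite)
    (hdc : ∀ a ∈ T, ∀ b, b ≤ a → b ∈ T) (y : ℕ) : y ∈ T ↔ y < T.ncard := by
  constructor
  · intro hy
    have hsub : (↑(Finset.Iic y) : Set ℕ) ⊆ T := by
      intro b hb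
      simp only [Finset.coe_Iic, Set.mem_Iic] at hb
      exact hdc y hy b hb
    have h1 : ((↑(Finset.Iic y) : Set ℕ)).ncard ≤ T.ncard := Set.ncard_le_ncard hsub hT
    rw [Set.ncard_coe_finset, Nat.card_Iic] at h1
    omega
  · intro hy
    by_contra hyn
    have hsub : T ⊆ (↑(Finset.Iio y) : Set ℕ) := by
      intro a ha
      simp only [Finset.coe_Iio, Set.mem_Iio]
      by_contra han
      exact hyn (hdc a ha y (le_of_not_gt han))
    have h1 := Set.ncard_le_ncard hsub (Set.finite_coe_iff.mp ?_)
    · rw [Set.ncard_coe_finset, Nat.card_Iio] at h1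
      omega
    · exact Set.Finite.to_subtype (Finset.finite_toSet _)

set_option maxHeartbeats 1000000 in
/-- a finite nonempty downward closed `S ⊆ ℕ²` of size `N` with `d`-robustness
at least `δ·N` for some `δ > 0` satisfies `N ≥ d²/2 + d·√(2δN) − d`. -/
theorem stmt_19 (d : ℕ) (hd : 1 ≤ d) (δ : ℝ) (hδ : 0 < δ)
    (S : Set (ℕ × ℕ)) (hfin : S.Finite) (hne : S.Nonempty)
    (hdc : ∀ y ∈ S, ∀ x : ℕ × ℕ, x.1 ≤ y.1 → x.2 ≤ y.2 → x ∈ S)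
    (hrob : ∀ d1 d2 : ℕ, d1 + d2 = d →
      δ * S.ncard ≤ ({p ∈ S | d1 ≤ p.1 ∧ d2 ≤ p.2}.ncard : ℝ)) :
    (d : ℝ) ^ 2 / 2 + (d : ℝ) * Real.sqrt (2 * δ * S.ncard) - (d : ℝ) ≤ (S.ncard : ℝ) := by
  classical
  have hNpos : 0 < S.ncard := (Set.ncard_pos hfin).mpr hne
  have hNposR : (0:ℝ) < (S.ncard : ℝ) := by exact_mod_cast hNpos
  set t : ℝ := Real.sqrt (2 * δ * S.ncard) with htdef
  have htnn : 0 ≤ t := Real.sqrt_nonneg _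
  have ht2 : t ^ 2 = 2 * δ * S.ncard := Real.sq_sqrt (by positivity)
  set F : Finset (ℕ × ℕ) := hfin.toFinset with hFdef
  have hmemF : ∀ p : ℕ × ℕ, p ∈ F ↔ p ∈ S := fun p => hfin.mem_toFinset
  have hcardF : F.card = S.ncard := (Set.ncard_eq_toFinset_card S hfin).symm
  -- column heights
  have hcolfin : ∀ x : ℕ, {y : ℕ | (x, y) ∈ S}.Finite := by
    intro x
    have hsub : {y : ℕ | (x, y) ∈ S} ⊆ Prod.snd '' S := fun y hy => ⟨(x,y), hy, rfl⟩
    exact (hfin.image _).subset hsub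
  set H : ℕ → ℕ := fun x => {y : ℕ | (x, y) ∈ S}.ncard with hHdef
  have hmem : ∀ x y : ℕ, (x, y) ∈ S ↔ y < H x := by
    intro x y
    exact nat_dc_iff _ (hcolfin x) (fun a ha b hb => hdc (x,a) ha (x,b) le_rfl hb) y
  have hmono : ∀ x x' : ℕ, x ≤ x' → H x' ≤ H x := by
    intro x x' hx
    by_contra hlt
    push_neg at hlt
    have h1 : (x', H x) ∈ S := (hmem x' (H x)).mpr hlt
    have h2 : (x, H x) ∈ S := hdc _ h1 (x, H x) hx le_rfl
    have h3 := (hmem x (H x)).mp h2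
    omega
  -- finite columns as images
  have himg : ∀ x c : ℕ, F.filter (fun p => p.1 = x ∧ c ≤ p.2)
      = (Finset.Ico c (H x)).image (fun y => (x, y)) := by
    intro x c
    ext p
    simp only [Finset.mem_filter, Finset.mem_image, Finset.mem_Ico, hmemF]
    constructor
    · rintro ⟨hpS, hpx, hcy⟩
      refine ⟨p.2, ⟨hcy, ?_⟩, ?_⟩
      · subst hpx; exact (hmem p.1 p.2).mp hpS
      · subst hpx; rfl
    · rintro ⟨y, ⟨hcy, hyH⟩, rfl⟩
      exact ⟨(hmem x y).mpr hyH, rfl, hcy⟩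
  have hinj : ∀ x : ℕ, Function.Injective (fun y => ((x, y) : ℕ × ℕ)) := by
    intro x a b hab
    simpa using congrArg Prod.snd hab
  have hcardcol : ∀ x c : ℕ, (F.filter (fun p => p.1 = x ∧ c ≤ p.2)).card = H x - c := by
    intro x c
    rw [himg x c, Finset.card_image_of_injective _ (hinj x), Nat.card_Ico]
  -- bound on first coordinates
  obtain ⟨X, hXd, hXF⟩ : ∃ X : ℕ, d < X ∧ ∀ p ∈ F, p.1 < X := by
    refine ⟨max (d+1) ((F.sup Prod.fst) + 1), ?_, ?_⟩
    · exact lt_of_lt_of_le (Nat.lt_succ_self d) (le_max_left _ _)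
    · intro p hp
      have := Finset.le_sup (f := Prod.fst) hp
      have h2 : (F.sup Prod.fst) + 1 ≤ max (d+1) ((F.sup Prod.fst) + 1) := le_max_right _ _
      omega
  -- N as a sum of column heights
  have hNsum : S.ncard = ∑ x ∈ Finset.range X, H x := by
    rw [← hcardF]
    rw [Finset.card_eq_sum_card_fiberwise (f := Prod.fst) (t := Finset.range X)
      (fun p hp => Finset.mem_range.mpr (hXF p hp))]
    refine Finset.sum_congr rfl fun x hx => ?_
    have heq : F.filter (fun p => p.1 = x) = F.filter (fun p => p.1 = x ∧ 0 ≤ p.2) := by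
      apply Finset.filter_congr
      intro p hp
      simp
    rw [heq, hcardcol x 0, Nat.sub_zero]
  -- corner counts
  have hcornerN : ∀ s : ℕ, s ≤ d →
      {p ∈ S | s ≤ p.1 ∧ (d - s) ≤ p.2}.ncard = ∑ x ∈ Finset.Ico s X, (H x - (d - s)) := by
    intro s hs
    have hset : {p ∈ S | s ≤ p.1 ∧ (d - s) ≤ p.2}
        = ↑(F.filter (fun p => s ≤ p.1 ∧ (d - s) ≤ p.2)) := by
      ext p
      simp only [Set.mem_setOf_eq, Finset.coe_filter, hmemF]
    rw [hset, Set.ncard_coe_finset]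
    rw [Finset.card_eq_sum_card_fiberwise (f := Prod.fst) (t := Finset.Ico s X)
      (fun p hp => by
        rw [Finset.mem_coe, Finset.mem_filter] at hp
        exact Finset.mem_Ico.mpr ⟨hp.2.1, hXF p hp.1⟩)]
    refine Finset.sum_congr rfl fun x hx => ?_
    have heq : (F.filter (fun p => s ≤ p.1 ∧ (d - s) ≤ p.2)).filter (fun p => p.1 = x)
        = F.filter (fun p => p.1 = x ∧ (d - s) ≤ p.2) := by
      ext p
      simp only [Finset.mem_filter]
      constructor
      · rintro ⟨⟨h1, _, h3⟩, h4⟩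
        exact ⟨h1, h4, h3⟩
      · rintro ⟨h1, h2, h3⟩
        have hsx : s ≤ x := (Finset.mem_Ico.mp hx).1
        exact ⟨⟨h1, by omega, h3⟩, h2⟩
    rw [heq, hcardcol]
  -- real corner bound
  have hP : ∀ s : ℕ, s ≤ d →
      δ * S.ncard ≤ ∑ x ∈ Finset.Ico s X, ((H x - (d - s) : ℕ) : ℝ) := by
    intro s hs
    have h1 := hrob s (d - s) (by omega)
    rw [hcornerN s hs] at h1
    rw [Nat.cast_sum] at h1
    exact h1
  -- staircase
  have hstair : ∀ x : ℕ, x ≤ d → d - x < H x := by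
    intro x hx
    have h1 := hrob x (d - x) (by omega)
    by_contra hHx
    push_neg at hHx
    have hzero : {p ∈ S | x ≤ p.1 ∧ (d - x) ≤ p.2} = ∅ := by
      ext p
      simp only [Set.mem_setOf_eq, Set.mem_empty_iff_false, iff_false, not_and]
      intro hpS hp1 hp2
      have hx2 : (x, p.2) ∈ S := hdc p hpS (x, p.2) hp1 le_rfl
      have := (hmem x p.2).mp hx2
      omega
    rw [hzero, Set.ncard_empty] at h1
    have : (0:ℝ) < δ * S.ncard := mul_pos hδ hNposR
    simp at h1
    linarith
  have hHd1 : 1 ≤ H d := by have := hstair d le_rfl; omega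
  -- Gauss sum helper
  have hgauss : ∀ a b : ℕ, a ≤ b → ∑ x ∈ Finset.Ico a b, ((x : ℝ) - (a : ℝ))
      = ((b:ℝ) - a) * (((b:ℝ) - a) - 1) / 2 := by
    intro a b hab
    rw [Finset.sum_Ico_eq_sum_range]
    have hcong : ∀ i ∈ Finset.range (b - a), ((a + i : ℕ) : ℝ) - (a:ℝ) = (i:ℝ) := by
      intro i hi; push_cast; ring
    rw [Finset.sum_congr rfl hcong]
    have hpure : ∀ m : ℕ, ∑ i ∈ Finset.range m, (i:ℝ) = (m:ℝ) * ((m:ℝ) - 1) / 2 := by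
      intro m
      induction m with
      | zero => simp
      | succ n ihn => rw [Finset.sum_range_succ, ihn]; push_cast; ring
    rw [hpure]
    have : ((b - a : ℕ) : ℝ) = (b:ℝ) - (a:ℝ) := by
      rw [Nat.cast_sub hab]
    rw [this]
  -- sum of (d - x) over Ico a d
  have hgauss2 : ∀ a : ℕ, a ≤ d → ∑ x ∈ Finset.Ico a d, ((d:ℝ) - (x:ℝ))
      = ((d:ℝ) - a) * (((d:ℝ) - a) + 1) / 2 := by
    intro a ha
    have h1 : ∑ x ∈ Finset.Ico a d, ((d:ℝ) - (x:ℝ))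
        = ∑ x ∈ Finset.Ico a d, (((d:ℝ) - (a:ℝ)) - ((x:ℝ) - (a:ℝ))) := by
      apply Finset.sum_congr rfl; intro x hx; ring
    rw [h1, Finset.sum_sub_distrib, hgauss a d ha, Finset.sum_const, Nat.card_Ico,
      nsmul_eq_mul, Nat.cast_sub ha]
    ring
  -- the K function
  set K : ℕ → ℝ := fun x => (H x : ℝ) - (d : ℝ) + (x : ℝ) with hKdef
  have hPt : δ * S.ncard = t^2 / 2 := by rw [ht2]; ring
  -- chain lemma
  have chain : ∀ fuel s : ℕ, d - s ≤ fuel → s + H d ≤ d →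
      ∃ T, s ≤ T ∧ T ≤ d ∧ d < T + H d ∧
        (t - 1/2) * ((T:ℝ) - (s:ℝ)) + ∑ x ∈ Finset.Ico T d, ((H d : ℝ) - ((d:ℝ) - (x:ℝ)))
          ≤ ∑ x ∈ Finset.Ico s d, K x := by
    intro fuel
    induction fuel with
    | zero =>
      intro s h0 hsd
      exfalso
      omega
    | succ n ih =>
      intro s hfuel hsd
      have hs_le_d : s ≤ d := by omega
      have hsd' : s < d := by omega
      have hexists : ∃ x, H x ≤ d - s := ⟨d, by omega⟩
      set τ := Nat.find hexists with hτdef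
      have hτspec : H τ ≤ d - s := Nat.find_spec hexists
      have hτmin : ∀ x, x < τ → ¬ (H x ≤ d - s) := fun x hx => Nat.find_min hexists hx
      have hτle : τ ≤ d := Nat.find_min' hexists (by omega)
      have hsτ : s < τ := by
        rcases Nat.lt_or_ge s τ with h | h
        · exact h
        · exfalso
          have h1 : H s ≤ H τ := hmono τ s h
          have h2 := hstair s hs_le_d
          omega
      -- window bound
      have hwin : δ * S.ncard ≤ ∑ x ∈ Finset.Ico s τ, ((H x : ℝ) - ((d:ℝ) - (s:ℝ))) := by
        have h1 := hP s hs_le_d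
        have hτX : τ ≤ X := by omega
        rw [← Finset.sum_Ico_consecutive _ (le_of_lt hsτ) hτX] at h1
        have hzero2 : ∑ x ∈ Finset.Ico τ X, ((H x - (d - s) : ℕ) : ℝ) = 0 := by
          apply Finset.sum_eq_zero
          intro x hx
          have hτx : τ ≤ x := (Finset.mem_Ico.mp hx).1
          have : H x ≤ H τ := hmono τ x hτx
          have : H x - (d - s) = 0 := by omega
          rw [this]; simp
        rw [hzero2, add_zero] at h1
        have hcast : ∑ x ∈ Finset.Ico s τ, ((H x - (d - s) : ℕ) : ℝ)
            = ∑ x ∈ Finset.Ico s τ, ((H x : ℝ) - ((d:ℝ) - (s:ℝ))) := by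
          apply Finset.sum_congr rfl
          intro x hx
          have hxτ : x < τ := (Finset.mem_Ico.mp hx).2
          have h2 : ¬ (H x ≤ d - s) := hτmin x hxτ
          push_neg at h2
          rw [Nat.cast_sub (le_of_lt h2), Nat.cast_sub hs_le_d]
        rw [hcast] at h1
        exact h1
      -- mass bound
      have hKsum : ∑ x ∈ Finset.Ico s τ, K x
          = ∑ x ∈ Finset.Ico s τ, ((H x : ℝ) - ((d:ℝ) - (s:ℝ)))
            + ∑ x ∈ Finset.Ico s τ, ((x:ℝ) - (s:ℝ)) := by
        rw [← Finset.sum_add_distrib]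
        apply Finset.sum_congr rfl
        intro x hx
        simp only [hKdef]
        ring
      have hstep : (t - 1/2) * ((τ:ℝ) - (s:ℝ)) ≤ ∑ x ∈ Finset.Ico s τ, K x := by
        rw [hKsum, hgauss s τ (le_of_lt hsτ)]
        have hm1 : (1:ℝ) ≤ (τ:ℝ) - (s:ℝ) := by
          have : (s:ℝ) + 1 ≤ (τ:ℝ) := by exact_mod_cast hsτ
          linarith
        nlinarith [hwin, hPt, sq_nonneg (t - ((τ:ℝ) - (s:ℝ)))]
      rcases le_or_gt (τ + H d) d with hcase | hcase
      · -- recurse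
        have hfuel' : d - τ ≤ n := by omega
        obtain ⟨T, hT1, hT2, hT3, hT4⟩ := ih τ hfuel' hcase
        refine ⟨T, le_trans (le_of_lt hsτ) hT1, hT2, hT3, ?_⟩
        have hsum : (∑ x ∈ Finset.Ico s τ, K x) + ∑ x ∈ Finset.Ico τ d, K x
            = ∑ x ∈ Finset.Ico s d, K x :=
          Finset.sum_Ico_consecutive K (le_of_lt hsτ) hτle
        have hTτ : (t - 1/2) * ((T:ℝ) - (s:ℝ))
            = (t - 1/2) * ((τ:ℝ) - (s:ℝ)) + (t - 1/2) * ((T:ℝ) - (τ:ℝ)) := by ring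
        linarith [hstep, hT4]
      · -- terminal
        refine ⟨τ, le_of_lt hsτ, hτle, by omega, ?_⟩
        have hfloor : ∑ x ∈ Finset.Ico τ d, ((H d : ℝ) - ((d:ℝ) - (x:ℝ)))
            ≤ ∑ x ∈ Finset.Ico τ d, K x := by
          apply Finset.sum_le_sum
          intro x hx
          have hxd : x ≤ d := le_of_lt (Finset.mem_Ico.mp hx).2
          have h1 : H d ≤ H x := hmono x d hxd
          have h1R : (H d : ℝ) ≤ (H x : ℝ) := by exact_mod_cast h1
          simp only [hKdef]
          linarith
        have hsum : (∑ x ∈ Finset.Ico s τ, K x) + ∑ x ∈ Finset.Ico τ d, K x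
            = ∑ x ∈ Finset.Ico s d, K x :=
          Finset.sum_Ico_consecutive K (le_of_lt hsτ) hτle
        linarith [hstep, hfloor]
  -- assembly
  have hNR : (S.ncard : ℝ) = ∑ x ∈ Finset.range X, (H x : ℝ) := by
    rw [hNsum]; push_cast; ring
  have hBr : δ * S.ncard ≤ ∑ x ∈ Finset.Ico d X, (H x : ℝ) := by
    have h1 := hP d le_rfl
    have heq : ∑ x ∈ Finset.Ico d X, ((H x - (d - d) : ℕ) : ℝ)
        = ∑ x ∈ Finset.Ico d X, (H x : ℝ) := by
      apply Finset.sum_congr rfl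
      intro x hx
      rw [Nat.sub_self, Nat.sub_zero]
    rw [heq] at h1
    exact h1
  have hsplitN : (S.ncard : ℝ) = (∑ x ∈ Finset.Ico 0 d, (H x : ℝ)) + ∑ x ∈ Finset.Ico d X, (H x : ℝ) := by
    rw [hNR, Finset.range_eq_Ico, ← Finset.sum_Ico_consecutive _ (Nat.zero_le d) (le_of_lt hXd)]
  have hdR1 : (1:ℝ) ≤ (d:ℝ) := by exact_mod_cast hd
  rcases le_or_gt (H d) d with hcase | hcase
  · -- main case h ≤ d
    obtain ⟨T, hT0, hTd, hTh, hchain⟩ := chain d 0 (by omega) (by omega)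
    have hKsum0 : ∑ x ∈ Finset.Ico 0 d, (H x : ℝ)
        = (∑ x ∈ Finset.Ico 0 d, K x) + ((d:ℝ) * ((d:ℝ) + 1)) / 2 := by
      have h1 : ∑ x ∈ Finset.Ico 0 d, (H x : ℝ)
          = ∑ x ∈ Finset.Ico 0 d, (K x + ((d:ℝ) - (x:ℝ))) := by
        apply Finset.sum_congr rfl
        intro x hx
        simp only [hKdef]
        ring
      rw [h1, Finset.sum_add_distrib, hgauss2 0 (Nat.zero_le d)]
      push_cast
      ring
    have hfloorform : ∑ x ∈ Finset.Ico T d, ((H d : ℝ) - ((d:ℝ) - (x:ℝ)))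
        = ((d:ℝ) - T) * (H d : ℝ) - ((d:ℝ) - T) * (((d:ℝ) - T) + 1) / 2 := by
      rw [Finset.sum_sub_distrib, Finset.sum_const, Nat.card_Ico, nsmul_eq_mul,
        Nat.cast_sub hTd, hgauss2 T hTd]
    -- gather real facts
    set B : ℝ := (d:ℝ) - (T:ℝ) with hBdef
    have hB0 : 0 ≤ B := by
      have : (T:ℝ) ≤ (d:ℝ) := by exact_mod_cast hTd
      simp only [hBdef]; linarith
    have hBh : B ≤ (H d : ℝ) - 1 := by
      have : (d:ℝ) + 1 ≤ (T:ℝ) + (H d : ℝ) := by exact_mod_cast hTh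
      simp only [hBdef]; linarith
    have hfinal : (∑ x ∈ Finset.Ico 0 d, K x) ≥ (t - 1/2) * ((d:ℝ) - B)
        + B * (H d : ℝ) - B * (B + 1) / 2 := by
      rw [hfloorform] at hchain
      have hT : (T:ℝ) = (d:ℝ) - B := by simp only [hBdef]; ring
      rw [hT] at hchain
      push_cast at hchain
      linarith [hchain]
    have hNlow : (S.ncard : ℝ) ≥ (t - 1/2) * ((d:ℝ) - B) + B * (H d : ℝ) - B * (B + 1) / 2
        + ((d:ℝ) * ((d:ℝ) + 1)) / 2 + t^2/2 := by
      rw [hsplitN, hKsum0]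
      have := hBr
      rw [hPt] at this
      linarith [hfinal]
    -- final inequality
    have q1 : 0 ≤ B * ((H d : ℝ) - 1 - B) := mul_nonneg hB0 (by linarith)
    have q1' : 0 ≤ B * (H d : ℝ) - B - B * B := by nlinarith [q1]
    have q2 : 0 ≤ t^2 - 2*(t*B) + B*B := by nlinarith [sq_nonneg (t - B)]
    clear_value B t
    linarith [hNlow, q1', q2, hB0, hdR1]
  · -- tall case H d > d
    have hsum1 : ((d:ℝ)) * ((d:ℝ) + 1) ≤ ∑ x ∈ Finset.Ico 0 d, (H x : ℝ) := by
      have h1 : ∀ x ∈ Finset.Ico 0 d, ((d:ℝ) + 1) ≤ (H x : ℝ) := by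
        intro x hx
        have hxd : x ≤ d := le_of_lt (Finset.mem_Ico.mp hx).2
        have h2 : H d ≤ H x := hmono x d hxd
        have : d + 1 ≤ H x := by omega
        exact_mod_cast this
      calc ((d:ℝ)) * ((d:ℝ) + 1) = (Finset.Ico 0 d).card • ((d:ℝ) + 1) := by
            rw [Nat.card_Ico, Nat.sub_zero, nsmul_eq_mul]
        _ ≤ ∑ x ∈ Finset.Ico 0 d, (H x : ℝ) := by
            rw [← Finset.sum_const]
            exact Finset.sum_le_sum h1
    have hNlow : (S.ncard : ℝ) ≥ (d:ℝ) * ((d:ℝ)+1) + t^2/2 := by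
      rw [hsplitN]
      have := hBr
      rw [hPt] at this
      linarith
    have q3 : 0 ≤ (d:ℝ)*(d:ℝ) - 2*((d:ℝ)*t) + t^2 := by nlinarith [sq_nonneg ((d:ℝ) - t)]
    clear_value t
    linarith [hNlow, q3, hdR1, htnn]
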